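/- Let X_n, Y_n (n ∈ ℤ) be the Fourier coefficients of the vertex operators X(k) = exp(∑_{m≥1}(x_m − (1/m)∂/∂y_m)k^m)·exp(−∑_{m≥1}(1/m)(∂/∂x_m)k^{−m}) = ∑_n X_n k^n and Y(k) = ∑_n Y_n k^{−n} (the same with x and y exchanged, k replaced by k^{−1}). Then for all m, n ∈ ℤ: X_m X_n + X_{n−1} X_{m+1} = 0, Y_m Y_n + Y_{n−1} Y_{m+1} = 0, and [X_m, Y_n] = 0; in particular X_n X_{n+1} = 0 and Y_n Y_{n+1} = 0. -/

import Mathlib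

open PowerSeries Finset MvPolynomial

noncomputable section

/-- The polynomial ring ℚ[x₁,x₂,…,y₁,y₂,…]: `Sum.inl n ↔ xₙ`, `Sum.inr n ↔ yₙ`. -/
abbrev R2 := MvPolynomial (ℕ ⊕ ℕ) ℚ

/-- Formal exponential of a power series (intended for series with zero constant term). -/
def expPS {A : Type*} [CommRing A] [Algebra ℚ A] (f : PowerSeries A) : PowerSeries A :=
  PowerSeries.mk fun n =>
    ∑ k ∈ Finset.range (n + 1), (k.factorial : ℚ)⁻¹ • (PowerSeries.coeff n (f ^ k))

/-- ξ(x,z) = ∑_{n ≥ 1} x_n z^n. -/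
def xiX : PowerSeries R2 :=
  PowerSeries.mk fun n => if n = 0 then 0 else MvPolynomial.X (Sum.inl n)

/-- ξ(y,z) = ∑_{n ≥ 1} y_n z^n. -/
def xiY : PowerSeries R2 :=
  PowerSeries.mk fun n => if n = 0 then 0 else MvPolynomial.X (Sum.inr n)

/-- p_n(x), defined by ∑_{n≥0} p_n(x) z^n = exp(ξ(x,z)). -/
def px (n : ℕ) : R2 := PowerSeries.coeff n (expPS xiX)

/-- q_n(y) = p_n(y). -/
def qy (n : ℕ) : R2 := PowerSeries.coeff n (expPS xiY)

/-- p_n for n ∈ ℤ, with p_{-n} = 0 for n > 0. -/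
def pzx (n : ℤ) : R2 := if n < 0 then 0 else px n.toNat

/-- q_n for n ∈ ℤ, with q_{-n} = 0 for n > 0. -/
def qzy (n : ℤ) : R2 := if n < 0 then 0 else qy n.toNat

/-- The universal character S_{[λ,μ]}(x,y) attached to λ = (λ₁,…,λ_l), μ = (μ₁,…,μ_{l'})
(`lam i` is λ_{i+1}, `mu i` is μ_{i+1}): the determinant whose row i (1-based), for
1 ≤ i ≤ l', has entries q_{μ_{l'-i+1}+i-j}(y), and for l'+1 ≤ i ≤ l+l' has entries
p_{λ_{i-l'}-i+j}(x), j = 1,…,l+l'. -/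
def ucChar (l l' : ℕ) (lam : Fin l → ℕ) (mu : Fin l' → ℕ) : R2 :=
  Matrix.det (Matrix.of fun i j : Fin (l' + l) =>
    if h : (i : ℕ) < l' then
      qzy ((mu ⟨l' - 1 - (i : ℕ), by omega⟩ : ℕ) + (i : ℤ) - (j : ℤ))
    else
      pzx ((lam ⟨(i : ℕ) - l', by have := i.isLt; omega⟩ : ℕ) - (i : ℤ) + (j : ℤ)))

/-- The Taylor-shift substitution common to both vertex operators: the ℚ-algebra map
R2 → R2[k,k⁻¹] sending xₘ ↦ xₘ − k^{−m}/m and yₘ ↦ yₘ − k^m/m; it realizes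
exp(−ξ(∂̃_y,k))·exp(−ξ(∂̃_x,k⁻¹)) acting on polynomials, with `AddMonoidAlgebra.single e 1`
playing the role of kᵉ. -/
def shiftOp : R2 →ₐ[ℚ] AddMonoidAlgebra R2 ℤ :=
  MvPolynomial.aeval fun v =>
    match v with
    | Sum.inl m => AddMonoidAlgebra.single 0 (MvPolynomial.X (Sum.inl m)) -
        (m : ℚ)⁻¹ • AddMonoidAlgebra.single (-(m : ℤ)) 1
    | Sum.inr m => AddMonoidAlgebra.single 0 (MvPolynomial.X (Sum.inr m)) -
        (m : ℚ)⁻¹ • AddMonoidAlgebra.single ((m : ℤ)) 1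

/-- X_n, the coefficient of kⁿ in the vertex operator
X(k) = exp(ξ(x−∂̃_y,k))·exp(−ξ(∂̃_x,k⁻¹)) = (∑_a p_a(x) k^a)·(Taylor shift). -/
def opXv (n : ℤ) (f : R2) : R2 :=
  Finsupp.sum (shiftOp f).coeff fun e c => pzx (n - e) * c

/-- Y_n, the coefficient of k⁻ⁿ in the vertex operator
Y(k) = exp(ξ(y−∂̃_x,k⁻¹))·exp(−ξ(∂̃_y,k)) = (∑_a q_a(y) k^{−a})·(Taylor shift). -/
def opYv (n : ℤ) (f : R2) : R2 :=
  Finsupp.sum (shiftOp f).coeff fun e c => qzy (n + e) * c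

/-! ### Auxiliary: power series facts -/

lemma coeff_pow_eq_zero {f : PowerSeries R2} (h : PowerSeries.constantCoeff f = 0)
    {k b : ℕ} (hb : b < k) : PowerSeries.coeff b (f ^ k) = 0 :=
  X_pow_dvd_iff.mp (pow_dvd_pow_of_dvd (X_dvd_iff.mpr h) k) b hb

lemma coeff_X_mul_d (f : PowerSeries R2) (i : ℕ) :
    PowerSeries.coeff i (PowerSeries.X * d⁄dX R2 f) = (i : R2) * PowerSeries.coeff i f := by
  cases i with
  | zero =>
      simp only [coeff_zero_eq_constantCoeff, map_mul, PowerSeries.constantCoeff_X, zero_mul,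
        Nat.cast_zero]
  | succ i =>
      rw [coeff_succ_X_mul, coeff_derivative]
      push_cast
      ring

lemma newton (f : PowerSeries R2) (h0 : PowerSeries.constantCoeff f = 0) (n : ℕ) :
    (n : R2) * PowerSeries.coeff n (expPS f) =
      ∑ ij ∈ antidiagonal n,
        (ij.1 : R2) * PowerSeries.coeff ij.1 f * PowerSeries.coeff ij.2 (expPS f) := by
  cases n with
  | zero => simp
  | succ n =>
    set g : PowerSeries R2 := PowerSeries.X * d⁄dX R2 f with hg
    have key : ∀ k : ℕ, ((n+1 : ℕ) : R2) * PowerSeries.coeff (n+1) (f ^ k) =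
        (k : ℕ) • PowerSeries.coeff (n+1) (g * f ^ (k-1)) := by
      intro k
      have h1 : (PowerSeries.X : PowerSeries R2) * d⁄dX R2 (f ^ k) = (k : ℕ) • (g * f ^ (k-1)) := by
        rw [Derivation.leibniz_pow, smul_eq_mul, mul_smul_comm]
        congr 1
        rw [hg]; ring
      have h2 : PowerSeries.coeff (n+1) (PowerSeries.X * d⁄dX R2 (f ^ k)) =
          ((n+1 : ℕ) : R2) * PowerSeries.coeff (n+1) (f ^ k) := by
        rw [coeff_succ_X_mul, coeff_derivative]
        push_cast; ring
      rw [← h2, h1, map_nsmul]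
    have lhs1 : ((n+1 : ℕ) : R2) * PowerSeries.coeff (n+1) (expPS f) =
        ∑ k ∈ range (n+2), (k.factorial : ℚ)⁻¹ •
          (((n+1 : ℕ) : R2) * PowerSeries.coeff (n+1) (f ^ k)) := by
      simp only [expPS, coeff_mk, mul_sum, mul_smul_comm]
    rw [lhs1]
    simp_rw [key]
    rw [Finset.sum_range_succ']
    have hterm : ∀ k, (((k+1).factorial : ℚ))⁻¹ •
        ((k+1 : ℕ) • PowerSeries.coeff (n+1) (g * f ^ (k+1-1)))
        = (k.factorial : ℚ)⁻¹ • PowerSeries.coeff (n+1) (g * f ^ k) := by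
      intro k
      rw [← Nat.cast_smul_eq_nsmul ℚ, smul_smul]
      congr 1
      rw [Nat.factorial_succ]
      push_cast
      rw [mul_comm ((k:ℚ)+1) _, mul_inv, inv_mul_cancel_right₀ (by positivity)]
    simp only [hterm, Nat.cast_zero, zero_smul, smul_zero, add_zero]
    have hcg : ∀ i, PowerSeries.coeff i g = (i : R2) * PowerSeries.coeff i f :=
      fun i => by rw [hg]; exact coeff_X_mul_d f i
    simp_rw [PowerSeries.coeff_mul, hcg, Finset.smul_sum]
    rw [Finset.sum_comm]
    refine Finset.sum_congr rfl fun ij hij => ?_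
    by_cases h : ij.1 = 0
    · simp [h]
    · have hmem := Finset.HasAntidiagonal.mem_antidiagonal.mp hij
      have hj : ij.2 + 1 ≤ n + 1 := by omega
      have hexp : PowerSeries.coeff ij.2 (expPS f) =
          ∑ k ∈ range (ij.2 + 1), (k.factorial : ℚ)⁻¹ • PowerSeries.coeff ij.2 (f ^ k) := by
        simp [expPS]
      rw [hexp, Finset.mul_sum, ← Finset.sum_subset (Finset.range_subset_range.mpr hj)]
      · exact Finset.sum_congr rfl fun k _ => by rw [mul_smul_comm]
      · intro k hk1 hk2
        rw [coeff_pow_eq_zero h0 (by simp at hk1 hk2; omega), mul_zero, smul_zero]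

/-- generic ξ-series -/
def xiW (w : ℕ → ℕ ⊕ ℕ) : PowerSeries R2 :=
  PowerSeries.mk fun n => if n = 0 then 0 else MvPolynomial.X (w n)

def pW (w : ℕ → ℕ ⊕ ℕ) (n : ℕ) : R2 := PowerSeries.coeff n (expPS (xiW w))

lemma constantCoeff_xiW (w : ℕ → ℕ ⊕ ℕ) : PowerSeries.constantCoeff (xiW w) = 0 := by
  rw [← coeff_zero_eq_constantCoeff]
  simp [xiW]

lemma pW_zero (w : ℕ → ℕ ⊕ ℕ) : pW w 0 = 1 := by
  simp [pW, expPS]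

lemma newtonW (w : ℕ → ℕ ⊕ ℕ) (n : ℕ) :
    ((n : ℕ) : R2) * pW w n = ∑ i ∈ range n,
      ((i+1 : ℕ) : R2) * MvPolynomial.X (w (i+1)) * pW w (n-1-i) := by
  have h := newton (xiW w) (constantCoeff_xiW w) n
  rw [Finset.Nat.sum_antidiagonal_eq_sum_range_succ_mk, Finset.sum_range_succ'] at h
  rw [pW, h]
  have h0 : ((0:ℕ) : R2) * PowerSeries.coeff 0 (xiW w) *
      PowerSeries.coeff (n - 0) (expPS (xiW w)) = 0 := by
    simp
  rw [h0, add_zero]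
  refine Finset.sum_congr rfl fun i hi => ?_
  have h1 : PowerSeries.coeff (i+1) (xiW w) = MvPolynomial.X (w (i+1)) := by
    simp [xiW]
  rw [h1]
  have h2 : n - (i+1) = n - 1 - i := by omega
  rw [h2]
  rfl

lemma px_eq_pW (n : ℕ) : px n = pW (fun i => Sum.inl i) n := rfl
lemma qy_eq_pW (n : ℕ) : qy n = pW (fun i => Sum.inr i) n := rfl

lemma pzx_nat (n : ℕ) : pzx (n : ℤ) = px n := by simp [pzx]
lemma qzy_nat (n : ℕ) : qzy (n : ℤ) = qy n := by simp [qzy]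
lemma pzx_neg {a : ℤ} (h : a < 0) : pzx a = 0 := if_pos h
lemma qzy_neg {a : ℤ} (h : a < 0) : qzy a = 0 := if_pos h

/-! ### Auxiliary: the AddMonoidAlgebra side -/

abbrev AMA := AddMonoidAlgebra R2 ℤ

open AddMonoidAlgebra

lemma AMA_natCast_mul (m : ℕ) (z : AMA) : (m : AMA) * z = (m : ℚ) • z := by
  rw [Algebra.smul_def, map_natCast]

lemma cancel_natCast_succ (m : ℕ) {a b : AMA}
    (h : ((m+1 : ℕ) : AMA) * a = ((m+1 : ℕ) : AMA) * b) : a = b := by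
  rw [AMA_natCast_mul, AMA_natCast_mul] at h
  have hne : ((m+1 : ℕ) : ℚ) ≠ 0 := by positivity
  exact smul_right_injective AMA hne h

lemma single_smul_cancel (m : ℕ) (z : AMA) :
    ((m+1 : ℕ) : AMA) * (((m+1 : ℕ) : ℚ)⁻¹ • z) = z := by
  rw [AMA_natCast_mul, smul_smul, mul_inv_cancel₀ (by positivity), one_smul]

lemma single_sum' (a : ℤ) (s : Finset ℕ) (f : ℕ → R2) :
    AddMonoidAlgebra.single a (∑ i ∈ s, f i) = ∑ i ∈ s, AddMonoidAlgebra.single a (f i) :=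
  map_sum (AddMonoidAlgebra.singleAddHom a) f s

lemma expand_term (m : ℕ) (eps b : ℤ) (B P P' : R2) :
    ((m+1 : ℕ) : AMA) * (AddMonoidAlgebra.single 0 B -
        ((m+1 : ℕ) : ℚ)⁻¹ • AddMonoidAlgebra.single b 1) *
      (AddMonoidAlgebra.single 0 P - AddMonoidAlgebra.single eps P') =
    (AddMonoidAlgebra.single 0 (((m+1 : ℕ) : R2) * B * P) -
        AddMonoidAlgebra.single eps (((m+1 : ℕ) : R2) * B * P')) -
      (AddMonoidAlgebra.single b P - AddMonoidAlgebra.single (b + eps) P') := by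
  rw [mul_sub ((m+1 : ℕ) : AMA) (AddMonoidAlgebra.single 0 B)
      (((m+1 : ℕ) : ℚ)⁻¹ • AddMonoidAlgebra.single b 1),
    single_smul_cancel, AddMonoidAlgebra.natCast_def,
    AddMonoidAlgebra.single_mul_single, zero_add, sub_mul, mul_sub, mul_sub,
    AddMonoidAlgebra.single_mul_single, AddMonoidAlgebra.single_mul_single,
    AddMonoidAlgebra.single_mul_single, AddMonoidAlgebra.single_mul_single]
  simp only [zero_add, add_zero, one_mul]

lemma shift_gen (w : ℕ → ℕ ⊕ ℕ) (ε : ℤ) (Pz : ℤ → R2)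
    (hneg : ∀ a : ℤ, a < 0 → Pz a = 0)
    (hshift : ∀ i : ℕ, shiftOp (MvPolynomial.X (w (i+1))) =
      AddMonoidAlgebra.single 0 (MvPolynomial.X (w (i+1))) -
        ((i+1 : ℕ) : ℚ)⁻¹ • AddMonoidAlgebra.single (ε * (i+1)) 1)
    (hnewt : ∀ n : ℕ, ((n : ℕ) : R2) * Pz n = ∑ i ∈ range n,
      ((i+1 : ℕ) : R2) * MvPolynomial.X (w (i+1)) * Pz ((n : ℤ) - 1 - i))
    (hone : Pz 0 = 1) :
    ∀ a : ℤ, shiftOp (Pz a) = AddMonoidAlgebra.single 0 (Pz a) -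
      AddMonoidAlgebra.single ε (Pz (a - 1)) := by
  have key : ∀ n : ℕ, shiftOp (Pz (n : ℤ)) = AddMonoidAlgebra.single 0 (Pz (n : ℤ)) -
      AddMonoidAlgebra.single ε (Pz ((n : ℤ) - 1)) := by
    intro n
    induction n using Nat.strong_induction_on with
    | _ n IH =>
      match n with
      | 0 =>
          rw [show ((0:ℕ):ℤ) = 0 from rfl, hone, map_one,
            hneg (0 - 1 : ℤ) (by norm_num), AddMonoidAlgebra.single_zero, sub_zero,
            AddMonoidAlgebra.one_def]
      | (n+1) =>
        apply cancel_natCast_succ n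
        set tel : ℕ → AMA :=
          fun j => AddMonoidAlgebra.single (ε * (j+1)) (Pz ((n : ℤ) - j)) with htel
        have hterm : ∀ i ∈ range (n+1),
            ((i+1 : ℕ) : AMA) * shiftOp (MvPolynomial.X (w (i+1))) *
              shiftOp (Pz (((n+1 : ℕ) : ℤ) - 1 - i)) =
            (AddMonoidAlgebra.single 0 (((i+1 : ℕ) : R2) * MvPolynomial.X (w (i+1)) *
                Pz (((n+1 : ℕ) : ℤ) - 1 - i)) -
              AddMonoidAlgebra.single ε (((i+1 : ℕ) : R2) * MvPolynomial.X (w (i+1)) *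
                Pz ((n : ℤ) - 1 - i))) - (tel i - tel (i+1)) := by
          intro i hi
          have hi' : i ≤ n := by have := Finset.mem_range.mp hi; omega
          have harg0 : ((n+1 : ℕ) : ℤ) - 1 - i = ((n - i : ℕ) : ℤ) := by omega
          have harg1 : (((n - i : ℕ) : ℤ)) - 1 = ((n : ℤ) - 1 - i) := by omega
          have htel_i : tel i = AddMonoidAlgebra.single (ε * (i+1)) (Pz ((n - i : ℕ) : ℤ)) := by
            have h2 : (n : ℤ) - i = ((n - i : ℕ) : ℤ) := by omega
            simp only [htel, h2]
          have htel_i1 : tel (i+1) =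
              AddMonoidAlgebra.single (ε * (i+1) + ε) (Pz ((n : ℤ) - 1 - i)) := by
            have h1 : (n : ℤ) - ((i+1 : ℕ) : ℤ) = (n : ℤ) - 1 - i := by push_cast; ring
            have h2 : ε * (((i+1 : ℕ) : ℤ) + 1) = ε * (i+1) + ε := by push_cast; ring
            simp only [htel, h1, h2]
          rw [harg0, IH (n - i) (by omega), harg1, hshift i, expand_term, htel_i, htel_i1]
        calc ((n+1 : ℕ) : AMA) * shiftOp (Pz ((n+1 : ℕ) : ℤ))
            = shiftOp (((n+1 : ℕ) : R2) * Pz ((n+1 : ℕ) : ℤ)) := by rw [map_mul, map_natCast]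
          _ = ∑ i ∈ range (n+1), ((i+1 : ℕ) : AMA) * shiftOp (MvPolynomial.X (w (i+1))) *
              shiftOp (Pz (((n+1 : ℕ) : ℤ) - 1 - i)) := by
              rw [hnewt (n+1), map_sum]
              exact Finset.sum_congr rfl fun i hi => by rw [map_mul, map_mul, map_natCast]
          _ = (∑ i ∈ range (n+1), AddMonoidAlgebra.single 0 (((i+1 : ℕ) : R2) *
                MvPolynomial.X (w (i+1)) * Pz (((n+1 : ℕ) : ℤ) - 1 - i))
              - ∑ i ∈ range (n+1), AddMonoidAlgebra.single ε (((i+1 : ℕ) : R2) *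
                MvPolynomial.X (w (i+1)) * Pz ((n : ℤ) - 1 - i)))
              - ∑ i ∈ range (n+1), (tel i - tel (i+1)) := by
              rw [Finset.sum_congr rfl hterm, Finset.sum_sub_distrib, Finset.sum_sub_distrib]
          _ = ((n+1 : ℕ) : AMA) * (AddMonoidAlgebra.single 0 (Pz ((n+1 : ℕ) : ℤ)) -
              AddMonoidAlgebra.single ε (Pz (((n+1 : ℕ) : ℤ) - 1))) := by
              rw [Finset.sum_range_sub' tel (n+1), ← single_sum', ← single_sum', ← hnewt (n+1)]
              have hs2 : ∑ i ∈ range (n+1), ((i+1 : ℕ) : R2) * MvPolynomial.X (w (i+1)) *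
                  Pz ((n : ℤ) - 1 - i) = ((n : ℕ) : R2) * Pz (n : ℤ) := by
                rw [Finset.sum_range_succ, ← hnewt n, hneg ((n : ℤ) - 1 - (n : ℕ)) (by omega),
                  mul_zero, add_zero]
              rw [hs2]
              have ht0 : tel 0 = AddMonoidAlgebra.single ε (Pz (n : ℤ)) := by
                simp only [htel]; norm_num
              have htn : tel (n+1) = 0 := by
                simp only [htel, hneg ((n : ℤ) - ((n+1 : ℕ) : ℤ)) (by omega),
                  AddMonoidAlgebra.single_zero]
              have hc : ((n+1 : ℕ) : AMA) = AddMonoidAlgebra.single (0 : ℤ) ((n+1 : ℕ) : R2) :=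
                AddMonoidAlgebra.natCast_def _
              rw [ht0, htn, sub_zero, mul_sub, hc,
                AddMonoidAlgebra.single_mul_single, AddMonoidAlgebra.single_mul_single,
                zero_add, zero_add]
              have harg : ((n+1 : ℕ) : ℤ) - 1 = ((n : ℕ) : ℤ) := by omega
              rw [harg, sub_sub, ← AddMonoidAlgebra.single_add]
              congr 1
              push_cast
              ring
  intro a
  rcases lt_or_ge a 0 with h | h
  · rw [hneg a h, hneg (a-1) (by omega), map_zero, AddMonoidAlgebra.single_zero,
      AddMonoidAlgebra.single_zero, sub_zero]
  · obtain ⟨n, rfl⟩ := Int.eq_ofNat_of_zero_le h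
    exact key n

lemma pzx_pW (n : ℕ) : pzx (n : ℤ) = pW (fun i => Sum.inl i) n := by
  rw [pzx_nat, px_eq_pW]
lemma qzy_pW (n : ℕ) : qzy (n : ℤ) = pW (fun i => Sum.inr i) n := by
  rw [qzy_nat, qy_eq_pW]

lemma hnewt_pzx (n : ℕ) : ((n : ℕ) : R2) * pzx n = ∑ i ∈ range n,
    ((i+1 : ℕ) : R2) * MvPolynomial.X (Sum.inl (i+1)) * pzx ((n : ℤ) - 1 - i) := by
  rw [pzx_pW, newtonW]
  refine Finset.sum_congr rfl fun i hi => ?_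
  have hi' : i < n := Finset.mem_range.mp hi
  have h1 : ((n : ℤ) - 1 - i) = ((n - 1 - i : ℕ) : ℤ) := by omega
  rw [h1, pzx_pW]

lemma hnewt_qzy (n : ℕ) : ((n : ℕ) : R2) * qzy n = ∑ i ∈ range n,
    ((i+1 : ℕ) : R2) * MvPolynomial.X (Sum.inr (i+1)) * qzy ((n : ℤ) - 1 - i) := by
  rw [qzy_pW, newtonW]
  refine Finset.sum_congr rfl fun i hi => ?_
  have hi' : i < n := Finset.mem_range.mp hi
  have h1 : ((n : ℤ) - 1 - i) = ((n - 1 - i : ℕ) : ℤ) := by omega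
  rw [h1, qzy_pW]

lemma shiftP (a : ℤ) : shiftOp (pzx a) = AddMonoidAlgebra.single 0 (pzx a) -
    AddMonoidAlgebra.single (-1) (pzx (a - 1)) := by
  refine shift_gen (fun i => Sum.inl i) (-1) pzx (fun a h => pzx_neg h) ?_ hnewt_pzx ?_ a
  · intro i
    have : shiftOp (MvPolynomial.X (Sum.inl (i+1))) =
        AddMonoidAlgebra.single 0 (MvPolynomial.X (Sum.inl (i+1))) -
          ((i+1 : ℕ) : ℚ)⁻¹ • AddMonoidAlgebra.single (-((i+1 : ℕ) : ℤ)) 1 := by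
      simp [shiftOp]
    rw [this]
    congr 2
    push_cast; ring
  · rw [show ((0:ℤ)) = ((0:ℕ) : ℤ) from rfl, pzx_nat, px_eq_pW, pW_zero]

lemma shiftQ (a : ℤ) : shiftOp (qzy a) = AddMonoidAlgebra.single 0 (qzy a) -
    AddMonoidAlgebra.single 1 (qzy (a - 1)) := by
  refine shift_gen (fun i => Sum.inr i) 1 qzy (fun a h => qzy_neg h) ?_ hnewt_qzy ?_ a
  · intro i
    have : shiftOp (MvPolynomial.X (Sum.inr (i+1))) =
        AddMonoidAlgebra.single 0 (MvPolynomial.X (Sum.inr (i+1))) -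
          ((i+1 : ℕ) : ℚ)⁻¹ • AddMonoidAlgebra.single (((i+1 : ℕ) : ℤ)) 1 := by
      simp [shiftOp]
    rw [this]
    congr 2
    push_cast; ring
  · rw [show ((0:ℤ)) = ((0:ℕ) : ℤ) from rfl, qzy_nat, qy_eq_pW, pW_zero]

/-! ### pairing machinery -/

def pairL (F : ℤ → R2) : AMA →ₗ[ℚ] R2 :=
  (Finsupp.lsum ℚ fun e => LinearMap.mulLeft ℚ (F e)) ∘ₗ
    (AddMonoidAlgebra.coeffLinearEquiv ℚ).toLinearMap

lemma pairL_apply (F : ℤ → R2) (g : AMA) :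
    pairL F g = Finsupp.sum g.coeff fun e c => F e * c := rfl

lemma pairL_single (F : ℤ → R2) (a : ℤ) (c : R2) :
    pairL F (AddMonoidAlgebra.single a c) = F a * c := by
  rw [pairL_apply, AddMonoidAlgebra.coeff_single]
  exact Finsupp.sum_single_index (mul_zero _)

lemma pairL_single_mul (F : ℤ → R2) (a : ℤ) (r : R2) (h : AMA) :
    pairL F (AddMonoidAlgebra.single a r * h) = r * pairL (fun e => F (a + e)) h := by
  induction h using AddMonoidAlgebra.induction_linear with
  | zero => simp
  | add f g hf hg => rw [mul_add, map_add, hf, hg, map_add, mul_add]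
  | single b c =>
      rw [AddMonoidAlgebra.single_mul_single, pairL_single, pairL_single]
      ring

lemma pairL_fun_add (F F' : ℤ → R2) (h : AMA) :
    pairL (fun e => F e + F' e) h = pairL F h + pairL F' h := by
  induction h using AddMonoidAlgebra.induction_linear with
  | zero => simp
  | add f g hf hg =>
      rw [map_add, map_add, map_add, hf, hg]
      ring
  | single b c => rw [pairL_single, pairL_single, pairL_single]; ring

lemma pairL_fun_mulsub (r r' : R2) (F F' : ℤ → R2) (h : AMA) :
    pairL (fun e => r * F e - r' * F' e) h = r * pairL F h - r' * pairL F' h := by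
  induction h using AddMonoidAlgebra.induction_linear with
  | zero => simp
  | add f g hf hg =>
      rw [map_add, map_add, map_add, hf, hg]
      ring
  | single b c => rw [pairL_single, pairL_single, pairL_single]; ring

def opGen (F : ℤ → R2) (f : R2) : R2 := pairL F (shiftOp f)

lemma opXv_gen (n : ℤ) (f : R2) : opXv n f = opGen (fun e => pzx (n - e)) f := rfl
lemma opYv_gen (n : ℤ) (f : R2) : opYv n f = opGen (fun e => qzy (n + e)) f := rfl

def sum2 (G : ℤ → ℤ → R2) (f : R2) : R2 :=
  (shiftOp f).coeff.sum fun e c => pairL (G e) (shiftOp c)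

lemma opGen_comp (F G G' : ℤ → R2) (ε : ℤ)
    (hG : ∀ e, shiftOp (G e) = AddMonoidAlgebra.single 0 (G e) -
      AddMonoidAlgebra.single ε (G' e)) (f : R2) :
    opGen F (opGen G f) = sum2 (fun e e' => G e * F e' - G' e * F (ε + e')) f := by
  rw [opGen, opGen, pairL_apply (fun e => G e), map_finsuppSum, map_finsuppSum, sum2]
  refine Finsupp.sum_congr fun e he => ?_
  rw [map_mul, hG e, sub_mul, map_sub, pairL_single_mul, pairL_single_mul,
    pairL_fun_mulsub]
  simp only [zero_add]

/-! ### symmetry of the double shift -/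

def iota2 : R2 →ₐ[ℚ] AddMonoidAlgebra R2 (ℤ × ℤ) :=
  (AddMonoidAlgebra.mapDomainAlgHom ℚ R2 (AddMonoidHom.inr ℤ ℤ)).comp shiftOp

def flattenFun (g : AMA) : AddMonoidAlgebra R2 (ℤ × ℤ) :=
  Finsupp.sum g.coeff fun e c => AddMonoidAlgebra.single (e, 0) 1 * iota2 c

lemma flattenFun_zero : flattenFun 0 = 0 := Finsupp.sum_zero_index

lemma flattenFun_add (g h : AMA) : flattenFun (g + h) = flattenFun g + flattenFun h :=
  Finsupp.sum_add_index' (fun a => by rw [map_zero, mul_zero])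
    (fun a b₁ b₂ => by rw [map_add, mul_add])

lemma flattenFun_single (a : ℤ) (c : R2) :
    flattenFun (AddMonoidAlgebra.single a c) = AddMonoidAlgebra.single (a, 0) 1 * iota2 c :=
  Finsupp.sum_single_index (by rw [map_zero, mul_zero])

lemma flattenFun_mul (g h : AMA) : flattenFun (g * h) = flattenFun g * flattenFun h := by
  induction g using AddMonoidAlgebra.induction_linear with
  | zero => rw [zero_mul, flattenFun_zero, zero_mul]
  | add f g hf hg => rw [add_mul, flattenFun_add, flattenFun_add, hf, hg, add_mul]
  | single a r =>
    induction h using AddMonoidAlgebra.induction_linear with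
    | zero => rw [mul_zero, flattenFun_zero, mul_zero]
    | add f g hf hg => rw [mul_add, flattenFun_add, flattenFun_add, hf, hg, mul_add]
    | single b s =>
        rw [AddMonoidAlgebra.single_mul_single, flattenFun_single, flattenFun_single,
          flattenFun_single, map_mul,
          show ((a + b, (0:ℤ)) : ℤ × ℤ) = (a, 0) + (b, 0) from by simp]
        have h1 : (AddMonoidAlgebra.single ((a,(0:ℤ))) (1:R2)) *
            AddMonoidAlgebra.single ((b,(0:ℤ))) (1:R2) =
            AddMonoidAlgebra.single ((a,(0:ℤ)) + (b,(0:ℤ))) (1:R2) := by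
          rw [AddMonoidAlgebra.single_mul_single, one_mul]
        rw [← h1]
        ring

def flatten : AMA →ₐ[ℚ] AddMonoidAlgebra R2 (ℤ × ℤ) where
  toFun := flattenFun
  map_one' := by
    rw [AddMonoidAlgebra.one_def, flattenFun_single, map_one, mul_one,
      show (((0:ℤ),(0:ℤ)) : ℤ × ℤ) = (0 : ℤ × ℤ) from rfl, ← AddMonoidAlgebra.one_def]
  map_mul' := flattenFun_mul
  map_zero' := flattenFun_zero
  map_add' := flattenFun_add
  commutes' := fun q => by
    rw [AddMonoidAlgebra.coe_algebraMap]
    simp only [Function.comp_apply]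
    rw [flattenFun_single, AlgHom.commutes, AddMonoidAlgebra.coe_algebraMap]
    simp only [Function.comp_apply]
    rw [AddMonoidAlgebra.single_mul_single, one_mul]
    simp
    rfl

lemma shiftOp_X_inl (m : ℕ) : shiftOp (MvPolynomial.X (Sum.inl m)) =
    AddMonoidAlgebra.single 0 (MvPolynomial.X (Sum.inl m)) -
      (m : ℚ)⁻¹ • AddMonoidAlgebra.single (-(m : ℤ)) 1 := by simp [shiftOp]

lemma shiftOp_X_inr (m : ℕ) : shiftOp (MvPolynomial.X (Sum.inr m)) =
    AddMonoidAlgebra.single 0 (MvPolynomial.X (Sum.inr m)) -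
      (m : ℚ)⁻¹ • AddMonoidAlgebra.single ((m : ℤ)) 1 := by simp [shiftOp]

lemma iota2_X_inl (m : ℕ) : iota2 (MvPolynomial.X (Sum.inl m)) =
    AddMonoidAlgebra.single ((0:ℤ),(0:ℤ)) (MvPolynomial.X (Sum.inl m)) -
      (m:ℚ)⁻¹ • AddMonoidAlgebra.single ((0:ℤ),-(m:ℤ)) 1 := by
  rw [iota2, AlgHom.comp_apply, shiftOp_X_inl, map_sub, map_smul]
  simp only [AddMonoidAlgebra.mapDomainAlgHom_apply, AddMonoidAlgebra.mapDomain_single,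
    AddMonoidHom.inr_apply]

lemma iota2_X_inr (m : ℕ) : iota2 (MvPolynomial.X (Sum.inr m)) =
    AddMonoidAlgebra.single ((0:ℤ),(0:ℤ)) (MvPolynomial.X (Sum.inr m)) -
      (m:ℚ)⁻¹ • AddMonoidAlgebra.single ((0:ℤ),(m:ℤ)) 1 := by
  rw [iota2, AlgHom.comp_apply, shiftOp_X_inr, map_sub, map_smul]
  simp only [AddMonoidAlgebra.mapDomainAlgHom_apply, AddMonoidAlgebra.mapDomain_single,
    AddMonoidHom.inr_apply]

lemma flatten_shift_X_inl (m : ℕ) : flatten (shiftOp (MvPolynomial.X (Sum.inl m))) =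
    AddMonoidAlgebra.single ((0:ℤ),(0:ℤ)) (MvPolynomial.X (Sum.inl m)) -
      (m:ℚ)⁻¹ • AddMonoidAlgebra.single ((0:ℤ),-(m:ℤ)) 1 -
      (m:ℚ)⁻¹ • AddMonoidAlgebra.single ((-(m:ℤ)),(0:ℤ)) 1 := by
  rw [shiftOp_X_inl, map_sub, map_smul,
    show flatten (AddMonoidAlgebra.single (0:ℤ) (MvPolynomial.X (Sum.inl m))) = _ from
      flattenFun_single _ _,
    show flatten (AddMonoidAlgebra.single (-(m:ℤ)) (1:R2)) = _ from flattenFun_single _ _,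
    iota2_X_inl, map_one, mul_one, mul_sub, mul_smul_comm,
    AddMonoidAlgebra.single_mul_single, AddMonoidAlgebra.single_mul_single, one_mul, one_mul]
  norm_num

lemma flatten_shift_X_inr (m : ℕ) : flatten (shiftOp (MvPolynomial.X (Sum.inr m))) =
    AddMonoidAlgebra.single ((0:ℤ),(0:ℤ)) (MvPolynomial.X (Sum.inr m)) -
      (m:ℚ)⁻¹ • AddMonoidAlgebra.single ((0:ℤ),(m:ℤ)) 1 -
      (m:ℚ)⁻¹ • AddMonoidAlgebra.single (((m:ℤ)),(0:ℤ)) 1 := by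
  rw [shiftOp_X_inr, map_sub, map_smul,
    show flatten (AddMonoidAlgebra.single (0:ℤ) (MvPolynomial.X (Sum.inr m))) = _ from
      flattenFun_single _ _,
    show flatten (AddMonoidAlgebra.single ((m:ℤ)) (1:R2)) = _ from flattenFun_single _ _,
    iota2_X_inr, map_one, mul_one, mul_sub, mul_smul_comm,
    AddMonoidAlgebra.single_mul_single, AddMonoidAlgebra.single_mul_single, one_mul, one_mul]
  norm_num

lemma swap_flatten_shift (f : R2) :
    AddMonoidAlgebra.domCongr ℚ R2 (AddEquiv.prodComm : ℤ × ℤ ≃+ ℤ × ℤ)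
      (flatten (shiftOp f)) = flatten (shiftOp f) := by
  have : ((AddMonoidAlgebra.domCongr ℚ R2
      (AddEquiv.prodComm : ℤ × ℤ ≃+ ℤ × ℤ)).toAlgHom.comp
      (flatten.comp shiftOp)) = flatten.comp shiftOp := by
    apply MvPolynomial.algHom_ext
    intro v
    simp only [AlgHom.comp_apply, AlgEquiv.toAlgHom_eq_coe, AlgHom.coe_coe]
    cases v with
    | inl m =>
        rw [flatten_shift_X_inl, map_sub, map_sub, map_smul, map_smul]
        simp only [AlgEquiv.coe_algHom, AddMonoidAlgebra.domCongr_single, AddEquiv.coe_prodComm,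
          Prod.swap_prod_mk]
        abel
    | inr m =>
        rw [flatten_shift_X_inr, map_sub, map_sub, map_smul, map_smul]
        simp only [AlgEquiv.coe_algHom, AddMonoidAlgebra.domCongr_single, AddEquiv.coe_prodComm,
          Prod.swap_prod_mk]
        abel
  exact congrFun (congrArg (fun (F : R2 →ₐ[ℚ] AddMonoidAlgebra R2 (ℤ×ℤ)) => (F : R2 → _)) this) f

lemma sum_single_one_mul (q : ℤ × ℤ) (h : AddMonoidAlgebra R2 (ℤ × ℤ)) (F : ℤ × ℤ → R2) :
    Finsupp.sum (AddMonoidAlgebra.single q (1:R2) * h).coeff (fun p c => F p * c) =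
      Finsupp.sum h.coeff (fun p c => F (q + p) * c) := by
  induction h using AddMonoidAlgebra.induction_linear with
  | zero => simp
  | add f g hf hg =>
      rw [mul_add, AddMonoidAlgebra.coeff_add, Finsupp.sum_add_index' (fun p => mul_zero _) (fun p b₁ b₂ => mul_add _ _ _),
        AddMonoidAlgebra.coeff_add, Finsupp.sum_add_index' (fun p => mul_zero _) (fun p b₁ b₂ => mul_add _ _ _), hf, hg]
  | single p c =>
      rw [AddMonoidAlgebra.single_mul_single, one_mul, AddMonoidAlgebra.coeff_single, AddMonoidAlgebra.coeff_single]
      rw [Finsupp.sum_single_index (h := fun p c => F p * c)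
        (show F (q + p) * 0 = 0 from mul_zero _)]
      exact (Finsupp.sum_single_index (h := fun p' c' => F (q + p') * c')
        (show F (q + p) * 0 = 0 from mul_zero _)).symm

lemma iota2_eq_mapDomain (c : R2) :
    (iota2 c).coeff = Finsupp.mapDomain (fun e => ((0, e) : ℤ × ℤ)) (shiftOp c).coeff := by
  rw [iota2, AlgHom.comp_apply, AddMonoidAlgebra.mapDomainAlgHom_apply]
  rfl

lemma pair2_eq (F : ℤ → ℤ → R2) (g : AMA) :
    (Finsupp.sum g.coeff fun e c => pairL (F e) (shiftOp c)) =
      Finsupp.sum (flatten g).coeff (fun p c => F p.1 p.2 * c) := by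
  induction g using AddMonoidAlgebra.induction_linear with
  | zero => rw [AddMonoidAlgebra.coeff_zero, Finsupp.sum_zero_index, map_zero, AddMonoidAlgebra.coeff_zero, Finsupp.sum_zero_index]
  | add f g hf hg =>
      rw [AddMonoidAlgebra.coeff_add, Finsupp.sum_add_index' (fun e => by rw [map_zero, map_zero])
          (fun e b₁ b₂ => by rw [map_add, map_add]), map_add, AddMonoidAlgebra.coeff_add,
        Finsupp.sum_add_index' (fun p => mul_zero _) (fun p b₁ b₂ => mul_add _ _ _), hf, hg]
  | single a c =>
      rw [AddMonoidAlgebra.coeff_single, Finsupp.sum_single_index (by rw [map_zero, map_zero]),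
        show flatten (AddMonoidAlgebra.single a c) =
          AddMonoidAlgebra.single (a, (0:ℤ)) 1 * iota2 c from flattenFun_single _ _,
        sum_single_one_mul, iota2_eq_mapDomain,
        Finsupp.sum_mapDomain_index (fun e => mul_zero _) (fun e b₁ b₂ => mul_add _ _ _),
        pairL_apply]
      refine Finsupp.sum_congr fun e he => ?_
      norm_num

lemma sum2_swap (G : ℤ → ℤ → R2) (f : R2) : sum2 G f = sum2 (fun e e' => G e' e) f := by
  rw [sum2, sum2, pair2_eq, pair2_eq]
  conv_lhs => rw [← swap_flatten_shift f]
  have hd : ((AddMonoidAlgebra.domCongr ℚ R2 (AddEquiv.prodComm : ℤ × ℤ ≃+ ℤ × ℤ))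
      (flatten (shiftOp f))).coeff =
      Finsupp.mapDomain (AddEquiv.prodComm : ℤ × ℤ ≃+ ℤ × ℤ) (flatten (shiftOp f)).coeff := by
    rw [show (AddMonoidAlgebra.domCongr ℚ R2 (AddEquiv.prodComm : ℤ × ℤ ≃+ ℤ × ℤ))
        (flatten (shiftOp f)) = (AddMonoidAlgebra.domCongr ℚ R2
          (AddEquiv.prodComm : ℤ × ℤ ≃+ ℤ × ℤ)).toAlgHom (flatten (shiftOp f)) from rfl,
      AddMonoidAlgebra.domCongr_toAlgHom, AddMonoidAlgebra.mapDomainAlgHom_apply]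
    rfl
  rw [hd, Finsupp.sum_mapDomain_index (fun p => mul_zero _) (fun p b₁ b₂ => mul_add _ _ _)]
  refine Finsupp.sum_congr fun p hp => ?_
  simp

lemma pairL_fun_zero (h : AMA) : pairL (fun _ => (0:R2)) h = 0 := by
  induction h using AddMonoidAlgebra.induction_linear with
  | zero => simp
  | add f g hf hg => rw [map_add, hf, hg, add_zero]
  | single a c => rw [pairL_single, zero_mul]

lemma sum2_zero (f : R2) : sum2 (fun _ _ => (0:R2)) f = 0 := by
  rw [sum2]
  rw [Finsupp.sum]
  refine Finset.sum_eq_zero fun e he => pairL_fun_zero _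

lemma sum2_add (G H : ℤ → ℤ → R2) (f : R2) :
    sum2 G f + sum2 H f = sum2 (fun e e' => G e e' + H e e') f := by
  rw [sum2, sum2, sum2, Finsupp.sum, Finsupp.sum, Finsupp.sum, ← Finset.sum_add_distrib]
  exact Finset.sum_congr rfl fun e he => (pairL_fun_add _ _ _).symm

lemma sum2_anti (K : ℤ → ℤ → R2) (hK : ∀ e e', K e' e = -K e e') (f : R2) :
    sum2 K f = 0 := by
  have h1 : sum2 K f + sum2 K f = 0 := by
    nth_rewrite 1 [sum2_swap K f]
    rw [sum2_add]
    have hz : (fun e e' => K e' e + K e e') = fun _ _ => (0:R2) := by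
      funext e e'
      rw [hK]; ring
    rw [hz, sum2_zero]
  have h2 : (2:ℚ) • sum2 K f = 0 := by rw [two_smul]; exact h1
  have h3 : sum2 K f = (2:ℚ)⁻¹ • ((2:ℚ) • sum2 K f) := by
    rw [smul_smul]; norm_num
  rw [h3, h2, smul_zero]

/-! ### compositions -/

lemma compXX (m n : ℤ) (f : R2) : opXv m (opXv n f) =
    sum2 (fun e e' => pzx (n - e) * pzx (m - e') -
      pzx (n - 1 - e) * pzx (m - (-1 + e'))) f := by
  have hG : ∀ e, shiftOp ((fun e => pzx (n - e)) e) =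
      AddMonoidAlgebra.single 0 ((fun e => pzx (n - e)) e) -
        AddMonoidAlgebra.single (-1) ((fun e => pzx (n - 1 - e)) e) := by
    intro e
    simp only []
    rw [shiftP (n - e)]
    have h : n - e - 1 = n - 1 - e := by ring
    rw [h]
  rw [opXv_gen m, opXv_gen n, opGen_comp _ _ _ _ hG f]

lemma compYY (m n : ℤ) (f : R2) : opYv m (opYv n f) =
    sum2 (fun e e' => qzy (n + e) * qzy (m + e') -
      qzy (n - 1 + e) * qzy (m + (1 + e'))) f := by
  have hG : ∀ e, shiftOp ((fun e => qzy (n + e)) e) =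
      AddMonoidAlgebra.single 0 ((fun e => qzy (n + e)) e) -
        AddMonoidAlgebra.single 1 ((fun e => qzy (n - 1 + e)) e) := by
    intro e
    simp only []
    rw [shiftQ (n + e)]
    have h : n + e - 1 = n - 1 + e := by ring
    rw [h]
  rw [opYv_gen m, opYv_gen n, opGen_comp _ _ _ _ hG f]

lemma compXY (m n : ℤ) (f : R2) : opXv m (opYv n f) =
    sum2 (fun e e' => qzy (n + e) * pzx (m - e') -
      qzy (n - 1 + e) * pzx (m - (1 + e'))) f := by
  have hG : ∀ e, shiftOp ((fun e => qzy (n + e)) e) =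
      AddMonoidAlgebra.single 0 ((fun e => qzy (n + e)) e) -
        AddMonoidAlgebra.single 1 ((fun e => qzy (n - 1 + e)) e) := by
    intro e
    simp only []
    rw [shiftQ (n + e)]
    have h : n + e - 1 = n - 1 + e := by ring
    rw [h]
  rw [opXv_gen m, opYv_gen n, opGen_comp _ _ _ _ hG f]

lemma compYX (m n : ℤ) (f : R2) : opYv n (opXv m f) =
    sum2 (fun e e' => pzx (m - e) * qzy (n + e') -
      pzx (m - 1 - e) * qzy (n + (-1 + e'))) f := by
  have hG : ∀ e, shiftOp ((fun e => pzx (m - e)) e) =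
      AddMonoidAlgebra.single 0 ((fun e => pzx (m - e)) e) -
        AddMonoidAlgebra.single (-1) ((fun e => pzx (m - 1 - e)) e) := by
    intro e
    simp only []
    rw [shiftP (m - e)]
    have h : m - e - 1 = m - 1 - e := by ring
    rw [h]
  rw [opYv_gen n, opXv_gen m, opGen_comp _ _ _ _ hG f]

lemma halfzero {a : R2} (h : a + a = 0) : a = 0 := by
  have h2 : (2:ℚ) • a = 0 := by rw [two_smul]; exact h
  have h3 : a = (2:ℚ)⁻¹ • ((2:ℚ) • a) := by rw [smul_smul]; norm_num
  rw [h3, h2, smul_zero]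

theorem stmt17 (m n : ℤ) (f : R2) :
    (opXv m (opXv n f) + opXv (n - 1) (opXv (m + 1) f) = 0) ∧
    (opYv m (opYv n f) + opYv (n - 1) (opYv (m + 1) f) = 0) ∧
    (opXv m (opYv n f) = opYv n (opXv m f)) ∧
    (opXv n (opXv (n + 1) f) = 0) ∧ (opYv n (opYv (n + 1) f) = 0) := by
  have hXX : ∀ m n : ℤ, opXv m (opXv n f) + opXv (n - 1) (opXv (m + 1) f) = 0 := by
    intro m n
    rw [compXX m n, compXX (n-1) (m+1), sum2_add]
    apply sum2_anti
    intro e e'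
    ring_nf
  have hYY : ∀ m n : ℤ, opYv m (opYv n f) + opYv (n - 1) (opYv (m + 1) f) = 0 := by
    intro m n
    rw [compYY m n, compYY (n-1) (m+1), sum2_add]
    apply sum2_anti
    intro e e'
    ring_nf
  refine ⟨hXX m n, hYY m n, ?_, ?_, ?_⟩
  · rw [compXY m n, compYX m n, sum2_swap]
    refine congrArg (fun K => sum2 K f) ?_
    funext e e'
    ring_nf
  · have h := hXX n (n+1)
    rw [show n + 1 - 1 = n from by ring] at h
    exact halfzero h
  · have h := hYY n (n+1)
    rw [show n + 1 - 1 = n from by ring] at h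
    exact halfzero h
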